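/- Let a, b ∈ ℝ³ be unit vectors and P := K⁺(a)K⁻(b). Then P commutes with K⁺(a) and with K⁻(b); and for every u ∈ ℝ³ with u·a = 0 and every v ∈ ℝ³ with v·b = 0 one has P K⁺(u) P = −K⁺(u) and P K⁻(v) P = −K⁻(v). Equivalently, for all X, Y ∈ ℝ⁴: ⟨K⁺(u)X, Y⟩ + ⟨K⁺(u)PX, PY⟩ = 0 and ⟨K⁻(v)X, Y⟩ + ⟨K⁻(v)PX, PY⟩ = 0. -/
import Mathlib


open Matrix

/-- The matrix of `K_{s₁⁺}`: e₁↦e₂, e₂↦−e₁, e₃↦e₄, e₄↦−e₃. -/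
def J1p : Matrix (Fin 4) (Fin 4) ℝ := !![0,-1,0,0; 1,0,0,0; 0,0,0,-1; 0,0,1,0]
/-- The matrix of `K_{s₂⁺}`: e₁↦e₃, e₃↦−e₁, e₄↦e₂, e₂↦−e₄. -/
def J2p : Matrix (Fin 4) (Fin 4) ℝ := !![0,0,-1,0; 0,0,0,1; 1,0,0,0; 0,-1,0,0]
/-- The matrix of `K_{s₃⁺}`: e₁↦e₄, e₄↦−e₁, e₂↦e₃, e₃↦−e₂. -/
def J3p : Matrix (Fin 4) (Fin 4) ℝ := !![0,0,0,-1; 0,0,-1,0; 0,1,0,0; 1,0,0,0]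
/-- The matrix of `K_{s₁⁻}`: e₁↦e₂, e₂↦−e₁, e₃↦−e₄, e₄↦e₃. -/
def J1m : Matrix (Fin 4) (Fin 4) ℝ := !![0,-1,0,0; 1,0,0,0; 0,0,0,1; 0,0,-1,0]
/-- The matrix of `K_{s₂⁻}`: e₁↦e₃, e₃↦−e₁, e₄↦−e₂, e₂↦e₄. -/
def J2m : Matrix (Fin 4) (Fin 4) ℝ := !![0,0,-1,0; 0,0,0,-1; 1,0,0,0; 0,1,0,0]
/-- The matrix of `K_{s₃⁻}`: e₁↦e₄, e₄↦−e₁, e₂↦−e₃, e₃↦e₂. -/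
def J3m : Matrix (Fin 4) (Fin 4) ℝ := !![0,0,0,-1; 0,0,1,0; 0,-1,0,0; 1,0,0,0]

/-- `K⁺(a) = a₁J₁⁺ + a₂J₂⁺ + a₃J₃⁺`. -/
def Kp (a : Fin 3 → ℝ) : Matrix (Fin 4) (Fin 4) ℝ := a 0 • J1p + a 1 • J2p + a 2 • J3p
/-- `K⁻(a) = a₁J₁⁻ + a₂J₂⁻ + a₃J₃⁻`. -/
def Km (a : Fin 3 → ℝ) : Matrix (Fin 4) (Fin 4) ℝ := a 0 • J1m + a 1 • J2m + a 2 • J3m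

theorem mul_fin_four {α} [AddCommMonoid α] [Mul α]
    (a₁₁ a₁₂ a₁₃ a₁₄ a₂₁ a₂₂ a₂₃ a₂₄ a₃₁ a₃₂ a₃₃ a₃₄ a₄₁ a₄₂ a₄₃ a₄₄
     b₁₁ b₁₂ b₁₃ b₁₄ b₂₁ b₂₂ b₂₃ b₂₄ b₃₁ b₃₂ b₃₃ b₃₄ b₄₁ b₄₂ b₄₃ b₄₄ : α) :
    !![a₁₁, a₁₂, a₁₃, a₁₄;
       a₂₁, a₂₂, a₂₃, a₂₄;
       a₃₁, a₃₂, a₃₃, a₃₄;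
       a₄₁, a₄₂, a₄₃, a₄₄] * !![b₁₁, b₁₂, b₁₃, b₁₄;
                                b₂₁, b₂₂, b₂₃, b₂₄;
                                b₃₁, b₃₂, b₃₃, b₃₄;
                                b₄₁, b₄₂, b₄₃, b₄₄] =
    !![a₁₁*b₁₁ + a₁₂*b₂₁ + a₁₃*b₃₁ + a₁₄*b₄₁, a₁₁*b₁₂ + a₁₂*b₂₂ + a₁₃*b₃₂ + a₁₄*b₄₂,
         a₁₁*b₁₃ + a₁₂*b₂₃ + a₁₃*b₃₃ + a₁₄*b₄₃, a₁₁*b₁₄ + a₁₂*b₂₄ + a₁₃*b₃₄ + a₁₄*b₄₄;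
       a₂₁*b₁₁ + a₂₂*b₂₁ + a₂₃*b₃₁ + a₂₄*b₄₁, a₂₁*b₁₂ + a₂₂*b₂₂ + a₂₃*b₃₂ + a₂₄*b₄₂,
         a₂₁*b₁₃ + a₂₂*b₂₃ + a₂₃*b₃₃ + a₂₄*b₄₃, a₂₁*b₁₄ + a₂₂*b₂₄ + a₂₃*b₃₄ + a₂₄*b₄₄;
       a₃₁*b₁₁ + a₃₂*b₂₁ + a₃₃*b₃₁ + a₃₄*b₄₁, a₃₁*b₁₂ + a₃₂*b₂₂ + a₃₃*b₃₂ + a₃₄*b₄₂,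
         a₃₁*b₁₃ + a₃₂*b₂₃ + a₃₃*b₃₃ + a₃₄*b₄₃, a₃₁*b₁₄ + a₃₂*b₂₄ + a₃₃*b₃₄ + a₃₄*b₄₄;
       a₄₁*b₁₁ + a₄₂*b₂₁ + a₄₃*b₃₁ + a₄₄*b₄₁, a₄₁*b₁₂ + a₄₂*b₂₂ + a₄₃*b₃₂ + a₄₄*b₄₂,
         a₄₁*b₁₃ + a₄₂*b₂₃ + a₄₃*b₃₃ + a₄₄*b₄₃, a₄₁*b₁₄ + a₄₂*b₂₄ + a₄₃*b₃₄ + a₄₄*b₄₄] := by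
  ext i j
  fin_cases i <;> fin_cases j
    <;> simp [Matrix.mul_apply, dotProduct, Fin.sum_univ_succ, ← add_assoc]

lemma Kp_eq (a : Fin 3 → ℝ) : Kp a =
    !![0, -a 0, -a 1, -a 2; a 0, 0, -a 2, a 1; a 1, a 2, 0, -a 0; a 2, -a 1, a 0, 0] := by
  ext i j
  fin_cases i <;> fin_cases j <;> simp [Kp, J1p, J2p, J3p, vecHead, vecTail]

lemma Km_eq (a : Fin 3 → ℝ) : Km a =
    !![0, -a 0, -a 1, -a 2; a 0, 0, a 2, -a 1; a 1, -a 2, 0, a 0; a 2, a 1, -a 0, 0] := by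
  ext i j
  fin_cases i <;> fin_cases j <;> simp [Km, J1m, J2m, J3m, vecHead, vecTail]

lemma anticomm_p (x y : Fin 3 → ℝ) :
    Kp x * Kp y + Kp y * Kp x = (-(2 * (x ⬝ᵥ y))) • (1 : Matrix (Fin 4) (Fin 4) ℝ) := by
  rw [Kp_eq, Kp_eq, mul_fin_four, mul_fin_four]
  ext i j
  fin_cases i <;> fin_cases j <;>
    simp [dotProduct, Fin.sum_univ_three, Matrix.one_apply] <;> ring

lemma anticomm_m (x y : Fin 3 → ℝ) :
    Km x * Km y + Km y * Km x = (-(2 * (x ⬝ᵥ y))) • (1 : Matrix (Fin 4) (Fin 4) ℝ) := by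
  rw [Km_eq, Km_eq, mul_fin_four, mul_fin_four]
  ext i j
  fin_cases i <;> fin_cases j <;>
    simp [dotProduct, Fin.sum_univ_three, Matrix.one_apply] <;> ring

lemma comm_pm (x y : Fin 3 → ℝ) : Kp x * Km y = Km y * Kp x := by
  rw [Kp_eq, Km_eq, mul_fin_four, mul_fin_four]
  ext i j
  fin_cases i <;> fin_cases j <;> simp <;> ring

lemma transpose_Kp (x : Fin 3 → ℝ) : (Kp x)ᵀ = -Kp x := by
  rw [Kp_eq]
  ext i j
  fin_cases i <;> fin_cases j <;> simp

lemma transpose_Km (x : Fin 3 → ℝ) : (Km x)ᵀ = -Km x := by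
  rw [Km_eq]
  ext i j
  fin_cases i <;> fin_cases j <;> simp

lemma sq_of_anticomm {n : ℕ} (M : Matrix (Fin n) (Fin n) ℝ)
    (h : M + M = (-(2 * (1:ℝ))) • (1 : Matrix (Fin n) (Fin n) ℝ)) : M = -1 := by
  have h2 : (2:ℝ) • M = (2:ℝ) • (-1 : Matrix (Fin n) (Fin n) ℝ) := by
    rw [two_smul, h]; module
  exact smul_right_injective _ two_ne_zero h2

lemma conj (A B U : Matrix (Fin 4) (Fin 4) ℝ) (hAB : A * B = B * A) (hA : A * A = -1)
    (hB : B * B = -1) (hUB : U * B = B * U) (hUA : U * A = -(A * U)) :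
    (A * B) * U * (A * B) = -U := by
  simp only [mul_assoc]
  rw [← mul_assoc B U, ← hUB]
  simp only [mul_assoc]
  rw [← mul_assoc B A, ← hAB]
  simp only [mul_assoc]
  rw [hB]
  simp only [mul_neg, mul_one, neg_inj]
  rw [hUA, mul_neg, ← mul_assoc, hA]
  simp

lemma bil {n : ℕ} (K Q : Matrix (Fin n) (Fin n) ℝ) (hQ : Qᵀ = Q) (h : Q * K * Q = -K)
    (X Y : Fin n → ℝ) : (K *ᵥ X) ⬝ᵥ Y + (K *ᵥ (Q *ᵥ X)) ⬝ᵥ (Q *ᵥ Y) = 0 := by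
  have key : (K *ᵥ (Q *ᵥ X)) ⬝ᵥ (Q *ᵥ Y) = ((Q * K * Q) *ᵥ X) ⬝ᵥ Y := by
    rw [Matrix.dotProduct_mulVec, ← Matrix.mulVec_transpose, hQ,
      Matrix.mulVec_mulVec, Matrix.mulVec_mulVec]
  rw [key, h, Matrix.neg_mulVec, neg_dotProduct, add_neg_cancel]

/-- For unit a, b ∈ ℝ³ and P = K⁺(a)K⁻(b): P commutes with K⁺(a) and K⁻(b); for
u ⊥ a and v ⊥ b one has PK⁺(u)P = −K⁺(u) and PK⁻(v)P = −K⁻(v); equivalently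
⟨K⁺(u)X,Y⟩ + ⟨K⁺(u)PX,PY⟩ = 0 and ⟨K⁻(v)X,Y⟩ + ⟨K⁻(v)PX,PY⟩ = 0 for all X, Y. -/
theorem stmt8 (a b : Fin 3 → ℝ) (ha : a ⬝ᵥ a = 1) (hb : b ⬝ᵥ b = 1) :
    (Kp a * Km b) * Kp a = Kp a * (Kp a * Km b) ∧
    (Kp a * Km b) * Km b = Km b * (Kp a * Km b) ∧
    (∀ u : Fin 3 → ℝ, u ⬝ᵥ a = 0 →
      (Kp a * Km b) * Kp u * (Kp a * Km b) = -Kp u ∧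
      ∀ X Y : Fin 4 → ℝ,
        (Kp u *ᵥ X) ⬝ᵥ Y +
          (Kp u *ᵥ ((Kp a * Km b) *ᵥ X)) ⬝ᵥ ((Kp a * Km b) *ᵥ Y) = 0) ∧
    (∀ v : Fin 3 → ℝ, v ⬝ᵥ b = 0 →
      (Kp a * Km b) * Km v * (Kp a * Km b) = -Km v ∧
      ∀ X Y : Fin 4 → ℝ,
        (Km v *ᵥ X) ⬝ᵥ Y +
          (Km v *ᵥ ((Kp a * Km b) *ᵥ X)) ⬝ᵥ ((Kp a * Km b) *ᵥ Y) = 0) := by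
  have hA2 : Kp a * Kp a = -1 := by
    have h := anticomm_p a a; rw [ha] at h; exact sq_of_anticomm _ h
  have hB2 : Km b * Km b = -1 := by
    have h := anticomm_m b b; rw [hb] at h; exact sq_of_anticomm _ h
  have hPt : (Kp a * Km b)ᵀ = Kp a * Km b := by
    rw [Matrix.transpose_mul, transpose_Km, transpose_Kp, Matrix.neg_mul,
      Matrix.mul_neg, neg_neg, ← comm_pm]
  refine ⟨?_, ?_, ?_, ?_⟩
  · rw [mul_assoc, ← comm_pm]
  · conv_rhs => rw [← mul_assoc, ← comm_pm]
  · intro u hu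
    have hUA : Kp u * Kp a = -(Kp a * Kp u) := by
      have h := anticomm_p u a
      rw [hu] at h
      norm_num at h
      exact eq_neg_of_add_eq_zero_left h
    have hM : (Kp a * Km b) * Kp u * (Kp a * Km b) = -Kp u :=
      conj _ _ _ (comm_pm a b) hA2 hB2 (comm_pm u b) hUA
    exact ⟨hM, fun X Y => bil _ _ hPt hM X Y⟩
  · intro v hv
    have hVB : Km v * Km b = -(Km b * Km v) := by
      have h := anticomm_m v b
      rw [hv] at h
      norm_num at h
      exact eq_neg_of_add_eq_zero_left h
    have hM' : (Km b * Kp a) * Km v * (Km b * Kp a) = -Km v :=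
      conj _ _ _ (comm_pm a b).symm hB2 hA2 (comm_pm a v).symm hVB
    have hM : (Kp a * Km b) * Km v * (Kp a * Km b) = -Km v := by
      rw [comm_pm]; exact hM'
    exact ⟨hM, fun X Y => bil _ _ hPt hM X Y⟩
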